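/- Let p_t and p_c be continuous probability densities on ℝ^m that attain their suprema, and suppose the maximum likelihood mode sets ℳ_t = {x : p_t(x) = sup p_t} and ℳ_c = {x : p_c(x) = sup p_c} are finite and nonempty. Suppose p_c is strictly conservative with respect to p_t: for every α ∈ (0,1], every minimum volume set of p_t with area α is contained in some minimum volume set of p_c with area α. Then ℳ_t ⊆ ℳ_c: every maximum likelihood mode of p_t is a maximum likelihood mode of p_c. -/

import Mathlib

open MeasureTheory

/-- `M` is a minimum volume set for the density `p` with area `α`: it is measurable,
has probability at least `α`, and has minimal Lebesgue measure among all measurable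
sets of probability at least `α`. -/
def IsMinVolSet (m : ℕ) (p : (Fin m → ℝ) → ℝ) (α : ℝ) (M : Set (Fin m → ℝ)) : Prop :=
  MeasurableSet M ∧ α ≤ (∫ x in M, p x) ∧
    ∀ X : Set (Fin m → ℝ), MeasurableSet X → α ≤ (∫ x in X, p x) →
      volume M ≤ volume X

open Set Filter Metric Topology
open scoped ENNReal

section Helpers

variable {m : ℕ}

lemma integrable_of_int_one {p : (Fin m → ℝ) → ℝ} (h : ∫ x, p x = 1) : Integrable p := by
  by_contra hc
  rw [integral_undef hc] at h; norm_num at h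


lemma lintegral_ofReal_eq_one {p : (Fin m → ℝ) → ℝ} (hnn : ∀ x, 0 ≤ p x)
    (hi : Integrable p) (h1 : ∫ x, p x = 1) :
    ∫⁻ x, ENNReal.ofReal (p x) = 1 := by
  rw [← ofReal_integral_eq_lintegral_ofReal hi (Eventually.of_forall hnn), h1, ENNReal.ofReal_one]


lemma vol_superlevel_lt_top {p : (Fin m → ℝ) → ℝ} (hc : Continuous p) (hnn : ∀ x, 0 ≤ p x)
    (hi : Integrable p) (h1 : ∫ x, p x = 1) {t : ℝ} (ht : 0 < t) :
    volume {x | t ≤ p x} < ∞ := by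
  have hm := mul_meas_ge_le_lintegral₀ (μ := volume)
    (f := fun x => ENNReal.ofReal (p x)) (hc.measurable.ennreal_ofReal.aemeasurable)
    (ENNReal.ofReal t)
  rw [lintegral_ofReal_eq_one hnn hi h1] at hm
  have hseteq : {x | ENNReal.ofReal t ≤ ENNReal.ofReal (p x)} = {x | t ≤ p x} := by
    ext x; simp [ENNReal.ofReal_le_ofReal_iff (hnn x)]
  rw [hseteq] at hm
  refine lt_top_iff_ne_top.2 fun hT => ?_
  rw [hT, ENNReal.mul_top (ENNReal.ofReal_pos.2 ht).ne'] at hm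
  simp at hm


lemma sup_pos {p : (Fin m → ℝ) → ℝ} (hnn : ∀ x, 0 ≤ p x)
    (h1 : ∫ x, p x = 1) (hbdd : BddAbove (Set.range p)) : 0 < ⨆ y, p y := by
  by_contra h
  push_neg at h
  have hz : ∀ x, p x = 0 := fun x => le_antisymm ((le_ciSup hbdd x).trans h) (hnn x)
  simp only [hz, integral_zero] at h1
  norm_num at h1


lemma exists_small_superlevel (hm : 0 < m) {p : (Fin m → ℝ) → ℝ} (hc : Continuous p)
    (hnn : ∀ x, 0 ≤ p x) (hi : Integrable p) (h1 : ∫ x, p x = 1)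
    (hbdd : BddAbove (Set.range p)) (hfin : {x | p x = ⨆ y, p y}.Finite)
    (hS : 0 < ⨆ y, p y) {c : ℝ≥0∞} (hcpos : 0 < c) :
    ∃ t, 0 < t ∧ t < (⨆ y, p y) ∧ volume {x | t ≤ p x} < c := by
  haveI : Nonempty (Fin m) := ⟨⟨0, hm⟩⟩
  set S := ⨆ y, p y with hSdef
  set A : ℕ → Set (Fin m → ℝ) := fun n => {x | S - S / (n + 1) ≤ p x} with hA
  have hmeas : ∀ n, MeasurableSet (A n) :=
    fun n => (isClosed_le continuous_const hc).measurableSet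
  have hanti : Antitone A := by
    intro i j hij x hx
    have h2 : S / ((j:ℝ) + 1) ≤ S / ((i:ℝ) + 1) :=
      div_le_div_of_nonneg_left hS.le (by positivity) (by exact_mod_cast by omega)
    simp only [hA, Set.mem_setOf_eq] at hx ⊢
    linarith
  have hfin1 : volume (A 1) ≠ ∞ := by
    have hpos : (0:ℝ) < S - S / ((1:ℕ) + 1) := by
      push_cast
      linarith [half_lt_self hS]
    exact (vol_superlevel_lt_top hc hnn hi h1 hpos).ne
  have hInter : ⋂ n, A n = {x | p x = S} := by
    ext x
    simp only [Set.mem_iInter, hA, Set.mem_setOf_eq]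
    constructor
    · intro h
      refine le_antisymm (le_ciSup hbdd x) ?_
      have htend : Tendsto (fun n : ℕ => S - S / (n + 1)) atTop (𝓝 S) := by
        have h0 : Tendsto (fun n : ℕ => S / ((n:ℝ) + 1)) atTop (𝓝 0) := by
          simpa [div_eq_mul_inv, mul_comm] using
            tendsto_one_div_add_atTop_nhds_zero_nat.const_mul S
        simpa using tendsto_const_nhds.sub h0
      exact le_of_tendsto' htend h
    · intro h n
      rw [h]
      have : 0 ≤ S / ((n:ℝ) + 1) := by positivity
      linarith
  have htends := tendsto_measure_iInter_atTop (μ := volume)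
    (fun n => (hmeas n).nullMeasurableSet) hanti ⟨1, hfin1⟩
  rw [hInter, hfin.measure_zero volume] at htends
  have hev : ∀ᶠ n : ℕ in atTop, volume (A n) < c := htends.eventually_lt_const hcpos
  obtain ⟨n, hn1, hnvol⟩ := ((eventually_ge_atTop 1).and hev).exists
  have hd2 : S / ((n:ℝ) + 1) ≤ S / 2 :=
    div_le_div_of_nonneg_left hS.le (by norm_num) (by exact_mod_cast by omega)
  have hdpos : 0 < S / ((n:ℝ) + 1) := by positivity
  exact ⟨S - S / ((n:ℝ) + 1), by linarith [half_lt_self hS], by linarith, hnvol⟩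


lemma isMinVolSet_superlevel {p : (Fin m → ℝ) → ℝ} (hc : Continuous p)
    (hnn : ∀ x, 0 ≤ p x) (hi : Integrable p) (h1 : ∫ x, p x = 1) {t : ℝ} (ht : 0 < t) :
    IsMinVolSet m p (∫ x in {x | t ≤ p x}, p x) {x | t ≤ p x} := by
  set A := {x | t ≤ p x} with hAdef
  have hAmeas : MeasurableSet A := (isClosed_le continuous_const hc).measurableSet
  have hAfin : volume A < ∞ := vol_superlevel_lt_top hc hnn hi h1 ht
  refine ⟨hAmeas, le_refl _, fun X hX hαX => ?_⟩
  by_cases hXtop : volume X = ∞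
  · rw [hXtop]; exact le_top
  have hAX : volume (A \ X) ≠ ∞ := ((measure_mono Set.diff_subset).trans_lt hAfin).ne
  have hXA : volume (X \ A) ≠ ∞ := by
    refine ((measure_mono Set.diff_subset).trans_lt ?_).ne
    exact lt_top_iff_ne_top.2 hXtop
  have hdisj1 : Disjoint (A ∩ X) (A \ X) := by
    refine Set.disjoint_left.2 fun x hx hx2 => hx2.2 hx.2
  have hdisj2 : Disjoint (X ∩ A) (X \ A) := by
    refine Set.disjoint_left.2 fun x hx hx2 => hx2.2 hx.2
  have e1 := setIntegral_union hdisj1 (hAmeas.diff hX) hi.integrableOn hi.integrableOn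
    (f := p) (μ := volume)
  rw [Set.inter_union_diff] at e1
  have e2 := setIntegral_union hdisj2 (hX.diff hAmeas) hi.integrableOn hi.integrableOn
    (f := p) (μ := volume)
  rw [Set.inter_union_diff] at e2
  -- bounds
  have b1 : t * (volume (A \ X)).toReal ≤ ∫ x in A \ X, p x := by
    have := setIntegral_mono_on (integrableOn_const hAX)
      hi.integrableOn (hAmeas.diff hX) (fun x hx => hx.1)
    rw [setIntegral_const, smul_eq_mul, measureReal_def] at this
    linarith [this]
  have b2 : ∫ x in X \ A, p x ≤ t * (volume (X \ A)).toReal := by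
    have := setIntegral_mono_on hi.integrableOn
      (integrableOn_const hXA)
      (hX.diff hAmeas) (fun x hx => le_of_lt (not_le.1 hx.2))
    rw [setIntegral_const, smul_eq_mul, measureReal_def] at this
    linarith [this]
  have hic : ∫ x in A ∩ X, p x = ∫ x in X ∩ A, p x := by rw [Set.inter_comm]
  have key : ∫ x in A \ X, p x ≤ ∫ x in X \ A, p x := by linarith
  have hle : (volume (A \ X)).toReal ≤ (volume (X \ A)).toReal := by
    have := le_trans b1 (le_trans key b2)
    exact le_of_mul_le_mul_left this ht
  have hvle : volume (A \ X) ≤ volume (X \ A) :=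
    (ENNReal.toReal_le_toReal hAX hXA).1 hle
  calc volume A = volume (A ∩ X) + volume (A \ X) := (measure_inter_add_diff A hX).symm
    _ ≤ volume (X ∩ A) + volume (X \ A) := by rw [Set.inter_comm]; exact add_le_add le_rfl hvle
    _ = volume X := measure_inter_add_diff X hAmeas


lemma exists_subset_volume_eq (hm : 0 < m) {G : Set (Fin m → ℝ)}
    (hG : MeasurableSet G) (hGfin : volume G ≠ ∞) {τ : ℝ} (hτ0 : 0 ≤ τ)
    (hτ : τ < (volume G).toReal) :
    ∃ S, S ⊆ G ∧ MeasurableSet S ∧ volume S = ENNReal.ofReal τ := by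
  haveI : Nonempty (Fin m) := ⟨⟨0, hm⟩⟩
  haveI : Nontrivial (Fin m → ℝ) :=
    ⟨fun _ => 0, fun _ => 1, fun h => zero_ne_one (congrFun h ⟨0, hm⟩)⟩
  have hmeasR : ∀ R : ℝ, MeasurableSet (G ∩ Metric.closedBall 0 R) :=
    fun R => hG.inter measurableSet_closedBall
  set g : ℝ → ℝ := fun R => ∫ x, Set.indicator (G ∩ Metric.closedBall 0 R) (fun _ => (1:ℝ)) x
    with hg
  have hgval : ∀ R, g R = (volume (G ∩ Metric.closedBall 0 R)).toReal := by
    intro R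
    rw [hg]
    simp only
    rw [integral_indicator_const (1:ℝ) (hmeasR R), smul_eq_mul, mul_one, measureReal_def]
  have hfinR : ∀ R : ℝ, volume (G ∩ Metric.closedBall 0 R) ≠ ∞ :=
    fun R => ((measure_mono Set.inter_subset_left).trans_lt (lt_top_iff_ne_top.2 hGfin)).ne
  have hbound_int : Integrable (Set.indicator G fun _ => (1:ℝ)) := by
    rw [integrable_indicator_iff hG]
    exact integrableOn_const hGfin
  have hgcont : Continuous g := by
    apply SeqContinuous.continuous
    intro Rs R hRs
    apply tendsto_integral_of_dominated_convergence (Set.indicator G fun _ => (1:ℝ))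
      (fun n => (measurable_const.indicator (hmeasR (Rs n))).aestronglyMeasurable)
      hbound_int
    · intro n
      refine Eventually.of_forall fun x => ?_
      by_cases hx : x ∈ G ∩ Metric.closedBall 0 (Rs n)
      · rw [Set.indicator_of_mem hx, Set.indicator_of_mem hx.1]; simp
      · rw [Set.indicator_of_notMem hx]
        simpa using Set.indicator_nonneg (fun _ _ => zero_le_one) x
    · have hsph : volume (Metric.sphere (0 : Fin m → ℝ) R) = 0 :=
        Measure.addHaar_sphere volume 0 R
      filter_upwards [measure_eq_zero_iff_ae_notMem.mp hsph] with x hx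
      by_cases hxG : x ∈ G
      · by_cases hlt : dist x 0 < R
        · apply Tendsto.congr' ?_ tendsto_const_nhds
          have hev : ∀ᶠ n in atTop, dist x 0 < Rs n := hRs.eventually (eventually_gt_nhds hlt)
          filter_upwards [hev] with n hn
          show Set.indicator (G ∩ Metric.closedBall 0 R) (fun _ => (1:ℝ)) x =
            Set.indicator (G ∩ Metric.closedBall 0 (Rs n)) (fun _ => (1:ℝ)) x
          rw [Set.indicator_of_mem
              (show x ∈ G ∩ Metric.closedBall 0 R from ⟨hxG, Metric.mem_closedBall.2 hlt.le⟩),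
            Set.indicator_of_mem
              (show x ∈ G ∩ Metric.closedBall 0 (Rs n) from ⟨hxG, Metric.mem_closedBall.2 hn.le⟩)]
        · have hgt : R < dist x 0 :=
            lt_of_le_of_ne (not_lt.1 hlt) fun h => hx (Metric.mem_sphere.2 h.symm)
          apply Tendsto.congr' ?_ tendsto_const_nhds
          have hev : ∀ᶠ n in atTop, Rs n < dist x 0 := hRs.eventually (eventually_lt_nhds hgt)
          filter_upwards [hev] with n hn
          show Set.indicator (G ∩ Metric.closedBall 0 R) (fun _ => (1:ℝ)) x =
            Set.indicator (G ∩ Metric.closedBall 0 (Rs n)) (fun _ => (1:ℝ)) x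
          rw [Set.indicator_of_notMem
              (fun h => absurd (Metric.mem_closedBall.1 h.2) (not_le.2 hgt)),
            Set.indicator_of_notMem
              (fun h => absurd (Metric.mem_closedBall.1 h.2) (not_le.2 hn))]
      · apply Tendsto.congr' ?_ tendsto_const_nhds
        refine Eventually.of_forall fun n => ?_
        show Set.indicator (G ∩ Metric.closedBall 0 R) (fun _ => (1:ℝ)) x =
          Set.indicator (G ∩ Metric.closedBall 0 (Rs n)) (fun _ => (1:ℝ)) x
        rw [Set.indicator_of_notMem (fun h => hxG h.1),
          Set.indicator_of_notMem (fun h => hxG h.1)]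
  have h0 : g 0 = 0 := by
    rw [hgval 0, Metric.closedBall_zero]
    have hz : volume (G ∩ {(0 : Fin m → ℝ)}) = 0 :=
      measure_mono_null Set.inter_subset_right (measure_singleton 0)
    rw [hz]; simp
  have hunion : ⋃ n : ℕ, G ∩ Metric.closedBall (0 : Fin m → ℝ) n = G := by
    ext x
    simp only [Set.mem_iUnion, Set.mem_inter_iff, Metric.mem_closedBall]
    constructor
    · rintro ⟨n, h, _⟩; exact h
    · intro h
      obtain ⟨n, hn⟩ := exists_nat_ge (dist x 0)
      exact ⟨n, h, hn⟩
  have hmono : Monotone fun n : ℕ => G ∩ Metric.closedBall (0 : Fin m → ℝ) n := by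
    intro i j hij
    exact Set.inter_subset_inter_right _ (Metric.closedBall_subset_closedBall (by exact_mod_cast hij))
  have hlim : Tendsto (fun n : ℕ => volume (G ∩ Metric.closedBall (0:Fin m → ℝ) n)) atTop
      (𝓝 (volume G)) := by
    have := tendsto_measure_iUnion_atTop (μ := volume) hmono
    rwa [hunion] at this
  have hglim : Tendsto (fun n : ℕ => g n) atTop (𝓝 ((volume G).toReal)) := by
    have := (ENNReal.tendsto_toReal hGfin).comp hlim
    refine this.congr fun n => ?_
    rw [hgval]
    rfl
  have hev : ∀ᶠ n : ℕ in atTop, τ < g n := hglim.eventually (eventually_gt_nhds hτ)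
  obtain ⟨n, hn⟩ := hev.exists
  have hIVT := intermediate_value_Icc (α := ℝ) (a := 0) (b := (n:ℝ)) (by positivity)
    hgcont.continuousOn
  have hmem : τ ∈ Set.Icc (g 0) (g ↑n) := by
    refine ⟨?_, hn.le⟩
    rw [h0]
    exact hτ0
  obtain ⟨R, _, hgR⟩ := hIVT hmem
  refine ⟨G ∩ Metric.closedBall 0 R, Set.inter_subset_left, hmeasR R, ?_⟩
  have : (volume (G ∩ Metric.closedBall 0 R)).toReal = τ := by rw [← hgval, hgR]
  rw [← this, ENNReal.ofReal_toReal (hfinR R)]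

end Helpers

set_option maxHeartbeats 2000000

/-- If `p_c` is strictly conservative w.r.t. `p_t` (every minimum volume set of `p_t`
is contained in some minimum volume set of `p_c`, for every area `α`), then every
maximum likelihood mode of `p_t` is a maximum likelihood mode of `p_c`. -/
theorem strictly_conservative_modes_subset
    (m : ℕ) (pt pc : (Fin m → ℝ) → ℝ)
    (hpt_cont : Continuous pt) (hpc_cont : Continuous pc)
    (hpt_nonneg : ∀ x, 0 ≤ pt x) (hpc_nonneg : ∀ x, 0 ≤ pc x)
    (hpt_int : ∫ x, pt x = 1) (hpc_int : ∫ x, pc x = 1)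
    (hpt_bdd : BddAbove (Set.range pt)) (hpc_bdd : BddAbove (Set.range pc))
    (hModt_fin : {x | pt x = ⨆ y, pt y}.Finite)
    (hModt_ne : {x | pt x = ⨆ y, pt y}.Nonempty)
    (hModc_fin : {x | pc x = ⨆ y, pc y}.Finite)
    (hModc_ne : {x | pc x = ⨆ y, pc y}.Nonempty)
    (hSC : ∀ α ∈ Set.Ioc (0:ℝ) 1, ∀ Mt : Set (Fin m → ℝ), IsMinVolSet m pt α Mt →
      ∃ Mc : Set (Fin m → ℝ), IsMinVolSet m pc α Mc ∧ Mt ⊆ Mc) :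
    {x | pt x = ⨆ y, pt y} ⊆ {x | pc x = ⨆ y, pc y} := by
  rcases Nat.eq_zero_or_pos m with hm | hm
  · subst hm
    intro x _
    haveI : Subsingleton (Fin 0 → ℝ) := ⟨fun a b => funext fun i => i.elim0⟩
    have hconst : ∀ y : Fin 0 → ℝ, pc y = pc x := fun y => congrArg pc (Subsingleton.elim y x)
    show pc x = ⨆ y, pc y
    rw [show (fun y : Fin 0 → ℝ => pc y) = fun _ => pc x from funext hconst, ciSup_const]
  intro x₀ hx₀
  simp only [Set.mem_setOf_eq] at hx₀ ⊢
  by_contra hne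
  have hpti : Integrable pt := integrable_of_int_one hpt_int
  have hpci : Integrable pc := integrable_of_int_one hpc_int
  set st := ⨆ y, pt y with hstdef
  set sc := ⨆ y, pc y with hscdef
  have hst_pos : 0 < st := sup_pos hpt_nonneg hpt_int hpt_bdd
  have hsc_pos : 0 < sc := sup_pos hpc_nonneg hpc_int hpc_bdd
  have hpcx₀ : pc x₀ < sc := lt_of_le_of_ne (le_ciSup hpc_bdd x₀) hne
  set ε := (sc - pc x₀) / 2 with hεdef
  have hε_pos : 0 < ε := by rw [hεdef]; linarith
  have hεlt : pc x₀ < sc - ε := by rw [hεdef]; linarith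
  have h2 : 0 < sc - ε := by linarith [hpc_nonneg x₀]
  have h3 : 0 < sc - ε / 2 := by linarith
  set B := {x | pc x < sc - ε} with hBdef
  have hB_open : IsOpen B := isOpen_lt hpc_cont continuous_const
  have hx₀B : x₀ ∈ B := hεlt
  set Wo := {x | sc - ε / 2 < pc x} with hWodef
  have hWo_open : IsOpen Wo := isOpen_lt continuous_const hpc_cont
  obtain ⟨y₀, hy₀⟩ := hModc_ne
  have hy₀eq : pc y₀ = sc := hy₀
  have hy₀Wo : y₀ ∈ Wo := by
    simp only [hWodef, Set.mem_setOf_eq, hy₀eq]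
    linarith
  set w₀ := volume Wo with hw₀def
  have hw₀_pos : 0 < w₀ := hWo_open.measure_pos volume ⟨y₀, hy₀Wo⟩
  have hw₀_fin : w₀ ≠ ∞ := by
    have hsub : Wo ⊆ {x | sc - ε / 2 ≤ pc x} := by
      intro x hx
      simp only [hWodef, Set.mem_setOf_eq] at hx ⊢
      linarith
    exact ((measure_mono hsub).trans_lt
      (vol_superlevel_lt_top hpc_cont hpc_nonneg hpci hpc_int h3)).ne
  have hhalf_fin : w₀ / 2 ≠ ∞ := ne_top_of_le_ne_top hw₀_fin ENNReal.half_le_self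
  -- choose s
  obtain ⟨s, hs_pos, hs_lt, hsvol⟩ := exists_small_superlevel hm hpc_cont hpc_nonneg hpci
    hpc_int hpc_bdd hModc_fin hsc_pos (ENNReal.half_pos hw₀_pos.ne')
  set W := {x | s ≤ pc x} with hWdef
  have hW_meas : MeasurableSet W := (isClosed_le continuous_const hpc_cont).measurableSet
  have hW_fin : volume W < ∞ := vol_superlevel_lt_top hpc_cont hpc_nonneg hpci hpc_int hs_pos
  set c₁ := ∫ x in W, pc x with hc₁def
  have hc₁_pos : 0 < c₁ := by
    have hy₀W' : y₀ ∈ {x | s < pc x} := by simp only [Set.mem_setOf_eq, hy₀eq]; exact hs_lt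
    have hsub2 : {x | s < pc x} ⊆ W := by
      intro x hx
      simp only [hWdef, Set.mem_setOf_eq] at hx ⊢
      linarith
    have hvolW_pos : 0 < volume W :=
      lt_of_lt_of_le ((isOpen_lt continuous_const hpc_cont).measure_pos volume ⟨y₀, hy₀W'⟩)
        (measure_mono hsub2)
    have hlow := setIntegral_mono_on
      (integrableOn_const hW_fin.ne) hpci.integrableOn hW_meas (fun x hx => hx)
    rw [setIntegral_const, smul_eq_mul, measureReal_def] at hlow
    have htr : 0 < (volume W).toReal := ENNReal.toReal_pos hvolW_pos.ne' hW_fin.ne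
    nlinarith
  -- choose t
  obtain ⟨t, ht_pos, ht_lt, htvol⟩ := exists_small_superlevel hm hpt_cont hpt_nonneg hpti
    hpt_int hpt_bdd hModt_fin hst_pos
    (c := ENNReal.ofReal (c₁ / st)) (ENNReal.ofReal_pos.2 (div_pos hc₁_pos hst_pos))
  set Mt := {x | t ≤ pt x} with hMtdef
  have hMt_meas : MeasurableSet Mt := (isClosed_le continuous_const hpt_cont).measurableSet
  have hMt_fin : volume Mt < ∞ := vol_superlevel_lt_top hpt_cont hpt_nonneg hpti hpt_int ht_pos
  set α := ∫ x in Mt, pt x with hαdef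
  have hMinMt : IsMinVolSet m pt α Mt :=
    isMinVolSet_superlevel hpt_cont hpt_nonneg hpti hpt_int ht_pos
  have hα_le_c₁ : α ≤ c₁ := by
    have hup := setIntegral_mono_on hpti.integrableOn
      (integrableOn_const hMt_fin.ne) hMt_meas (fun x _ => le_ciSup hpt_bdd x)
    rw [setIntegral_const, smul_eq_mul, measureReal_def] at hup
    have hlt2 : (volume Mt).toReal < c₁ / st :=
      ENNReal.toReal_lt_of_lt_ofReal htvol
    have htr : 0 ≤ (volume Mt).toReal := ENNReal.toReal_nonneg
    calc α ≤ (volume Mt).toReal * st := hup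
      _ ≤ (c₁ / st) * st := by nlinarith
      _ = c₁ := div_mul_cancel₀ _ hst_pos.ne'
  have hα_pos : 0 < α := by
    have hOpen : IsOpen {x | t < pt x} := isOpen_lt continuous_const hpt_cont
    have hx₀' : x₀ ∈ {x | t < pt x} := by simp only [Set.mem_setOf_eq, hx₀]; exact ht_lt
    have hsub3 : {x | t < pt x} ⊆ Mt := by
      intro x hx
      simp only [hMtdef, Set.mem_setOf_eq] at hx ⊢
      linarith
    have hvol_pos : 0 < volume Mt :=
      lt_of_lt_of_le (hOpen.measure_pos volume ⟨x₀, hx₀'⟩)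
        (measure_mono hsub3)
    have hlow := setIntegral_mono_on
      (integrableOn_const hMt_fin.ne) hpti.integrableOn hMt_meas (fun x hx => hx)
    rw [setIntegral_const, smul_eq_mul, measureReal_def] at hlow
    have htr : 0 < (volume Mt).toReal := ENNReal.toReal_pos hvol_pos.ne' hMt_fin.ne
    nlinarith
  have hα_le_one : α ≤ 1 := by
    rw [hαdef, ← hpt_int]
    exact setIntegral_le_integral hpti (Eventually.of_forall hpt_nonneg)
  obtain ⟨Mc, hMc, hMtMc⟩ := hSC α ⟨hα_pos, hα_le_one⟩ Mt hMinMt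
  obtain ⟨hMc_meas, hMc_int, hMc_min⟩ := hMc
  have hMc_le : volume Mc ≤ volume W := hMc_min W hW_meas hα_le_c₁
  have hMc_lt : volume Mc < w₀ / 2 := lt_of_le_of_lt hMc_le hsvol
  have hMc_fin : volume Mc ≠ ∞ := ne_top_of_lt hMc_lt
  -- the open set U around x₀ inside Mt on which pc is small
  set U := {x | t < pt x} ∩ B with hUdef
  have hU_open : IsOpen U := (isOpen_lt continuous_const hpt_cont).inter hB_open
  have hU_meas : MeasurableSet U := hU_open.measurableSet
  have hx₀U : x₀ ∈ U := ⟨by simp only [Set.mem_setOf_eq, hx₀]; exact ht_lt, hx₀B⟩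
  have hU_sub_Mt : U ⊆ Mt := by
    intro x hx
    have h1 : t < pt x := hx.1
    show t ≤ pt x
    exact le_of_lt h1
  have hU_sub_Mc : U ⊆ Mc := fun x hx => hMtMc (hU_sub_Mt hx)
  have hU_pos : 0 < volume U := hU_open.measure_pos volume ⟨x₀, hx₀U⟩
  have hU_le_Mc : volume U ≤ volume Mc := measure_mono hU_sub_Mc
  have hU_fin : volume U ≠ ∞ := ne_top_of_le_ne_top hMc_fin hU_le_Mc
  set v' := (volume U).toReal with hv'def
  have hv'_pos : 0 < v' := ENNReal.toReal_pos hU_pos.ne' hU_fin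
  set ρ := (sc - ε) / (sc - ε / 2) with hρdef
  have hρ_pos : 0 < ρ := div_pos h2 h3
  have hρ_lt : ρ < 1 := (div_lt_one h3).2 (by linarith)
  set τ := ρ * v' with hτdef
  have hτ_pos : 0 < τ := mul_pos hρ_pos hv'_pos
  have hτ_lt : τ < v' := by nlinarith
  -- the region G available for swapping
  set G := Wo \ Mc with hGdef
  have hG_meas : MeasurableSet G := hWo_open.measurableSet.diff hMc_meas
  have hG_fin : volume G ≠ ∞ := ne_top_of_le_ne_top hw₀_fin (measure_mono Set.diff_subset)
  have hvolU_eq : volume U = ENNReal.ofReal v' := (ENNReal.ofReal_toReal hU_fin).symm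
  have hcover : w₀ ≤ volume G + volume Mc := by
    calc w₀ = volume Wo := hw₀def
      _ ≤ volume (G ∪ Mc) := measure_mono (fun x hx => by
          by_cases hxm : x ∈ Mc
          · exact Or.inr hxm
          · exact Or.inl ⟨hx, hxm⟩)
      _ ≤ volume G + volume Mc := measure_union_le _ _
  have key : ∀ r : ℝ, ENNReal.ofReal r < volume U → ENNReal.ofReal r ≤ volume G := by
    intro r hr
    by_contra hcon
    push_neg at hcon
    have h1 : volume G + volume Mc < ENNReal.ofReal r + w₀ / 2 :=
      ENNReal.add_lt_add hcon hMc_lt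
    have h2' : ENNReal.ofReal r + w₀ / 2 ≤ w₀ / 2 + w₀ / 2 :=
      add_le_add (le_trans hr.le (le_trans hU_le_Mc hMc_lt.le)) le_rfl
    rw [ENNReal.add_halves] at h2'
    exact absurd (lt_of_le_of_lt hcover (lt_of_lt_of_le h1 h2')) (lt_irrefl _)
  have hτU : ENNReal.ofReal τ < volume U := by
    rw [hvolU_eq]
    exact (ENNReal.ofReal_lt_ofReal_iff hv'_pos).2 hτ_lt
  set τ' := (τ + v') / 2 with hτ'def
  have hττ' : τ < τ' := by rw [hτ'def]; linarith
  have hτ'v : τ' < v' := by rw [hτ'def]; linarith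
  have hτ'U : ENNReal.ofReal τ' < volume U := by
    rw [hvolU_eq]
    exact (ENNReal.ofReal_lt_ofReal_iff hv'_pos).2 hτ'v
  have hτG : τ < (volume G).toReal := by
    have h := key τ' hτ'U
    have := ENNReal.toReal_mono hG_fin h
    rw [ENNReal.toReal_ofReal (by positivity)] at this
    linarith
  obtain ⟨S, hS_sub, hS_meas, hS_vol⟩ := exists_subset_volume_eq hm hG_meas hG_fin hτ_pos.le hτG
  set X := (Mc \ U) ∪ S with hXdef
  have hX_meas : MeasurableSet X := (hMc_meas.diff hU_meas).union hS_meas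
  have hdisj : Disjoint (Mc \ U) S :=
    Set.disjoint_left.2 fun x hx hxS => (hS_sub hxS).2 hx.1
  have hIX : ∫ x in X, pc x = (∫ x in Mc \ U, pc x) + ∫ x in S, pc x := by
    rw [hXdef]
    exact setIntegral_union (f := pc) (μ := volume) hdisj hS_meas
      hpci.integrableOn hpci.integrableOn
  have hIMc : ∫ x in Mc \ U, pc x = (∫ x in Mc, pc x) - ∫ x in U, pc x := by
    exact integral_diff (f := pc) (μ := volume) hU_meas hpci.integrableOn hU_sub_Mc
  have hIU : ∫ x in U, pc x ≤ (sc - ε) * v' := by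
    have hb := setIntegral_mono_on hpci.integrableOn
      (integrableOn_const hU_fin : IntegrableOn (fun _ => sc - ε) U volume)
      hU_meas (fun x hx => by exact le_of_lt hx.2)
    rw [setIntegral_const, smul_eq_mul, measureReal_def] at hb
    linarith
  have hS_fin : volume S ≠ ∞ := by rw [hS_vol]; exact ENNReal.ofReal_ne_top
  have hS_toReal : (volume S).toReal = τ := by rw [hS_vol, ENNReal.toReal_ofReal hτ_pos.le]
  have hIS : (sc - ε) * v' ≤ ∫ x in S, pc x := by
    have hb := setIntegral_mono_on
      (integrableOn_const hS_fin)
      hpci.integrableOn hS_meas (fun x hx => le_of_lt (hS_sub hx).1)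
    rw [setIntegral_const, smul_eq_mul, measureReal_def, hS_toReal] at hb
    have heq : τ * (sc - ε / 2) = (sc - ε) * v' := by
      calc τ * (sc - ε / 2) = (sc - ε) / (sc - ε / 2) * (sc - ε / 2) * v' := by
            rw [hτdef, hρdef]; ring
        _ = (sc - ε) * v' := by rw [div_mul_cancel₀ _ (ne_of_gt h3)]
    linarith
  have hαX : α ≤ ∫ x in X, pc x := by
    rw [hIX, hIMc]
    linarith [hMc_int]
  have hXvol : volume X < volume Mc := by
    have h1 : volume X ≤ volume (Mc \ U) + volume S := measure_union_le _ _
    have hd : volume (Mc \ U) = volume Mc - volume U :=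
      measure_diff hU_sub_Mc hU_meas.nullMeasurableSet hU_fin
    have h3' : volume S < volume U := by rw [hS_vol]; exact hτU
    calc volume X ≤ volume (Mc \ U) + volume S := h1
      _ < volume (Mc \ U) + volume U := by
          refine ENNReal.add_lt_add_left ?_ h3'
          rw [hd]
          exact ne_top_of_le_ne_top hMc_fin tsub_le_self
      _ = volume Mc := by rw [hd, tsub_add_cancel_of_le hU_le_Mc]
  exact absurd (hMc_min X hX_meas hαX) (not_le.2 hXvol)
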